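/- Let I ⊆ ℝ be a nonempty open interval, f : I → ℝ, and λ₁,…,λ₄ ∈ [0,1] with λ₁+λ₂+λ₃+λ₄ = 1, not all equal to 1/4. Let P be the 4×4 left circulant matrix with first row (λ₁,λ₂,λ₃,λ₄) and each subsequent row the left cyclic shift of the previous one. If f((x₁+x₂+x₃+x₄)/4) ≤ (1/4)∑_{j=0}^{3} f(λ_{1⊕j}x₁+λ_{2⊕j}x₂+λ_{3⊕j}x₃+λ_{4⊕j}x₄) holds for all x₁,…,x₄ ∈ I, then f is Jensen convex on I. -/

import Mathlib

private lemma jensen_auxA (I : Set ℝ) (f : ℝ → ℝ) (l1 l2 l3 l4 : ℝ)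
    (hsum : l1 + l2 + l3 + l4 = 1)
    (hineq : ∀ x1 ∈ I, ∀ x2 ∈ I, ∀ x3 ∈ I, ∀ x4 ∈ I,
      f ((x1 + x2 + x3 + x4) / 4) ≤
        (1 / 4) * (f (l1 * x1 + l2 * x2 + l3 * x3 + l4 * x4)
          + f (l2 * x1 + l3 * x2 + l4 * x3 + l1 * x4)
          + f (l3 * x1 + l4 * x2 + l1 * x3 + l2 * x4)
          + f (l4 * x1 + l1 * x2 + l2 * x3 + l3 * x4)))
    (x y a1 a2 a3 a4 : ℝ)
    (m1 : x + a1 * (y - x) ∈ I) (m2 : x + a2 * (y - x) ∈ I)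
    (m3 : x + a3 * (y - x) ∈ I) (m4 : x + a4 * (y - x) ∈ I)
    (ha : a1 + a2 + a3 + a4 = 2)
    (e0 : l1*a1 + l2*a2 + l3*a3 + l4*a4 = 1)
    (e1 : l2*a1 + l3*a2 + l4*a3 + l1*a4 = 1/2)
    (e2 : l3*a1 + l4*a2 + l1*a3 + l2*a4 = 0)
    (e3 : l4*a1 + l1*a2 + l2*a3 + l3*a4 = 1/2) :
    f ((x + y) / 2) ≤ (f x + f y) / 2 := by
  have H := hineq _ m1 _ m2 _ m3 _ m4
  have Fm : f ((x + a1 * (y - x) + (x + a2 * (y - x)) + (x + a3 * (y - x)) + (x + a4 * (y - x))) / 4)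
      = f ((x + y) / 2) := congrArg f (by linear_combination ((y - x) / 4) * ha)
  have F0 : f (l1 * (x + a1 * (y - x)) + l2 * (x + a2 * (y - x)) + l3 * (x + a3 * (y - x)) + l4 * (x + a4 * (y - x)))
      = f y := congrArg f (by linear_combination x * hsum + (y - x) * e0)
  have F1 : f (l2 * (x + a1 * (y - x)) + l3 * (x + a2 * (y - x)) + l4 * (x + a3 * (y - x)) + l1 * (x + a4 * (y - x)))
      = f ((x + y) / 2) := congrArg f (by linear_combination x * hsum + (y - x) * e1)
  have F2 : f (l3 * (x + a1 * (y - x)) + l4 * (x + a2 * (y - x)) + l1 * (x + a3 * (y - x)) + l2 * (x + a4 * (y - x)))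
      = f x := congrArg f (by linear_combination x * hsum + (y - x) * e2)
  have F3 : f (l4 * (x + a1 * (y - x)) + l1 * (x + a2 * (y - x)) + l2 * (x + a3 * (y - x)) + l3 * (x + a4 * (y - x)))
      = f ((x + y) / 2) := congrArg f (by linear_combination x * hsum + (y - x) * e3)
  rw [Fm, F0, F1, F2, F3] at H
  linarith

private lemma jensen_auxB (I : Set ℝ) (f : ℝ → ℝ) (l1 l2 l3 l4 : ℝ)
    (hsum : l1 + l2 + l3 + l4 = 1)
    (hineq : ∀ x1 ∈ I, ∀ x2 ∈ I, ∀ x3 ∈ I, ∀ x4 ∈ I,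
      f ((x1 + x2 + x3 + x4) / 4) ≤
        (1 / 4) * (f (l1 * x1 + l2 * x2 + l3 * x3 + l4 * x4)
          + f (l2 * x1 + l3 * x2 + l4 * x3 + l1 * x4)
          + f (l3 * x1 + l4 * x2 + l1 * x3 + l2 * x4)
          + f (l4 * x1 + l1 * x2 + l2 * x3 + l3 * x4)))
    (x y a1 a2 a3 a4 : ℝ)
    (m1 : x + a1 * (y - x) ∈ I) (m2 : x + a2 * (y - x) ∈ I)
    (m3 : x + a3 * (y - x) ∈ I) (m4 : x + a4 * (y - x) ∈ I)
    (ha : a1 + a2 + a3 + a4 = 2)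
    (e0 : l1*a1 + l2*a2 + l3*a3 + l4*a4 = 1)
    (e1 : l2*a1 + l3*a2 + l4*a3 + l1*a4 = 0)
    (e2 : l3*a1 + l4*a2 + l1*a3 + l2*a4 = 1)
    (e3 : l4*a1 + l1*a2 + l2*a3 + l3*a4 = 0) :
    f ((x + y) / 2) ≤ (f x + f y) / 2 := by
  have H := hineq _ m1 _ m2 _ m3 _ m4
  have Fm : f ((x + a1 * (y - x) + (x + a2 * (y - x)) + (x + a3 * (y - x)) + (x + a4 * (y - x))) / 4)
      = f ((x + y) / 2) := congrArg f (by linear_combination ((y - x) / 4) * ha)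
  have F0 : f (l1 * (x + a1 * (y - x)) + l2 * (x + a2 * (y - x)) + l3 * (x + a3 * (y - x)) + l4 * (x + a4 * (y - x)))
      = f y := congrArg f (by linear_combination x * hsum + (y - x) * e0)
  have F1 : f (l2 * (x + a1 * (y - x)) + l3 * (x + a2 * (y - x)) + l4 * (x + a3 * (y - x)) + l1 * (x + a4 * (y - x)))
      = f x := congrArg f (by linear_combination x * hsum + (y - x) * e1)
  have F2 : f (l3 * (x + a1 * (y - x)) + l4 * (x + a2 * (y - x)) + l1 * (x + a3 * (y - x)) + l2 * (x + a4 * (y - x)))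
      = f y := congrArg f (by linear_combination x * hsum + (y - x) * e2)
  have F3 : f (l4 * (x + a1 * (y - x)) + l1 * (x + a2 * (y - x)) + l2 * (x + a3 * (y - x)) + l3 * (x + a4 * (y - x)))
      = f x := congrArg f (by linear_combination x * hsum + (y - x) * e3)
  rw [Fm, F0, F1, F2, F3] at H
  linarith

theorem stmt_19 (I : Set ℝ) (hne : I.Nonempty) (hop : IsOpen I) (hconv : Convex ℝ I)
    (f : ℝ → ℝ) (l1 l2 l3 l4 : ℝ)
    (h1 : l1 ∈ Set.Icc (0:ℝ) 1) (h2 : l2 ∈ Set.Icc (0:ℝ) 1)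
    (h3 : l3 ∈ Set.Icc (0:ℝ) 1) (h4 : l4 ∈ Set.Icc (0:ℝ) 1)
    (hsum : l1 + l2 + l3 + l4 = 1)
    (hnotall : ¬ (l1 = 1 / 4 ∧ l2 = 1 / 4 ∧ l3 = 1 / 4 ∧ l4 = 1 / 4))
    (hineq : ∀ x1 ∈ I, ∀ x2 ∈ I, ∀ x3 ∈ I, ∀ x4 ∈ I,
      f ((x1 + x2 + x3 + x4) / 4) ≤
        (1 / 4) * (f (l1 * x1 + l2 * x2 + l3 * x3 + l4 * x4)
          + f (l2 * x1 + l3 * x2 + l4 * x3 + l1 * x4)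
          + f (l3 * x1 + l4 * x2 + l1 * x3 + l2 * x4)
          + f (l4 * x1 + l1 * x2 + l2 * x3 + l3 * x4))) :
    ∀ u ∈ I, ∀ v ∈ I, f ((u + v) / 2) ≤ (f u + f v) / 2 := by
  -- Key local lemma: there is R > 0 such that Jensen's inequality holds for any
  -- pair (x, y) with enough room inside I.
  obtain ⟨R, hRpos, key⟩ :
      ∃ R : ℝ, 0 < R ∧ ∀ x y : ℝ,
        (∀ α : ℝ, |α - 1/2| ≤ R → x + α * (y - x) ∈ I) →
        f ((x + y) / 2) ≤ (f x + f y) / 2 := by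
    by_cases hmu : l1 - l2 + l3 - l4 = 0
    · -- then ρ = (l1-l3)² + (l2-l4)² ≠ 0
      have hrho : (l1 - l3)^2 + (l2 - l4)^2 ≠ 0 := by
        intro h
        have hp0 : l1 - l3 = 0 := by nlinarith [sq_nonneg (l1 - l3), sq_nonneg (l2 - l4)]
        have hq0 : l2 - l4 = 0 := by nlinarith [sq_nonneg (l1 - l3), sq_nonneg (l2 - l4)]
        exact hnotall ⟨by linarith, by linarith, by linarith, by linarith⟩
      set c : ℝ := 1 / (2 * ((l1 - l3)^2 + (l2 - l4)^2)) with hcdef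
      have hc : ((l1 - l3)^2 + (l2 - l4)^2) * c * 2 = 1 := by
        rw [hcdef]; field_simp
      refine ⟨1/2 + |(l1 - l3) * c| + |(l2 - l4) * c|, by positivity, fun x y hXY => ?_⟩
      have hb1 : x + (1/2 + (l1 - l3) * c) * (y - x) ∈ I := by
        apply hXY
        rw [show (1/2 + (l1 - l3) * c) - 1/2 = (l1 - l3) * c by ring]
        have := abs_nonneg ((l2 - l4) * c); linarith
      have hb2 : x + (1/2 + (l2 - l4) * c) * (y - x) ∈ I := by
        apply hXY
        rw [show (1/2 + (l2 - l4) * c) - 1/2 = (l2 - l4) * c by ring]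
        have := abs_nonneg ((l1 - l3) * c); linarith
      have hb3 : x + (1/2 - (l1 - l3) * c) * (y - x) ∈ I := by
        apply hXY
        rw [show (1/2 - (l1 - l3) * c) - 1/2 = -((l1 - l3) * c) by ring, abs_neg]
        have := abs_nonneg ((l2 - l4) * c); linarith
      have hb4 : x + (1/2 - (l2 - l4) * c) * (y - x) ∈ I := by
        apply hXY
        rw [show (1/2 - (l2 - l4) * c) - 1/2 = -((l2 - l4) * c) by ring, abs_neg]
        have := abs_nonneg ((l1 - l3) * c); linarith
      exact jensen_auxA I f l1 l2 l3 l4 hsum hineq x y _ _ _ _ hb1 hb2 hb3 hb4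
        (by ring)
        (by linear_combination (1/2) * hsum + (1/2) * hc)
        (by linear_combination (1/2) * hsum)
        (by linear_combination (1/2) * hsum - (1/2) * hc)
        (by linear_combination (1/2) * hsum)
    · -- μ ≠ 0 case
      set b : ℝ := 1 / (2 * (l1 - l2 + l3 - l4)) with hbdef
      have hb : (l1 - l2 + l3 - l4) * b * 2 = 1 := by
        rw [hbdef]; field_simp
      refine ⟨1/2 + |b|, by positivity, fun x y hXY => ?_⟩
      have hb1 : x + (1/2 + b) * (y - x) ∈ I := by
        apply hXY
        rw [show (1/2 + b) - 1/2 = b by ring]; linarith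
      have hb2 : x + (1/2 - b) * (y - x) ∈ I := by
        apply hXY
        rw [show (1/2 - b) - 1/2 = -b by ring, abs_neg]; linarith
      exact jensen_auxB I f l1 l2 l3 l4 hsum hineq x y _ _ _ _ hb1 hb2 hb1 hb2
        (by ring)
        (by linear_combination (1/2) * hsum + (1/2) * hb)
        (by linear_combination (1/2) * hsum - (1/2) * hb)
        (by linear_combination (1/2) * hsum + (1/2) * hb)
        (by linear_combination (1/2) * hsum - (1/2) * hb)
  intro u hu v hv
  set a : ℝ := min u v with hadef
  set bb : ℝ := max u v with hbbdef
  have haI : a ∈ I := by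
    rcases min_cases u v with ⟨h, _⟩ | ⟨h, _⟩ <;> rw [hadef, h] <;> assumption
  have hbI : bb ∈ I := by
    rcases max_cases u v with ⟨h, _⟩ | ⟨h, _⟩ <;> rw [hbbdef, h] <;> assumption
  obtain ⟨ea, hea, heaI⟩ := Metric.isOpen_iff.mp hop a haI
  obtain ⟨eb, heb, hebI⟩ := Metric.isOpen_iff.mp hop bb hbI
  set ε : ℝ := min ea eb / 2 with hεdef
  have hε : 0 < ε := by positivity
  have hmem1 : a - ε ∈ I := by
    apply heaI
    rw [Metric.mem_ball, Real.dist_eq]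
    have h1 : ε ≤ ea / 2 := by
      rw [hεdef]; have := min_le_left ea eb; linarith
    rw [show a - ε - a = -ε by ring, abs_neg, abs_of_pos hε]; linarith
  have hmem2 : bb + ε ∈ I := by
    apply hebI
    rw [Metric.mem_ball, Real.dist_eq]
    have h1 : ε ≤ eb / 2 := by
      rw [hεdef]; have := min_le_right ea eb; linarith
    rw [show bb + ε - bb = ε by ring, abs_of_pos hε]; linarith
  have hsub : Set.Icc (a - ε) (bb + ε) ⊆ I := hconv.ordConnected.out hmem1 hmem2
  set δ : ℝ := ε / R with hδdef
  have hδ : 0 < δ := by positivity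
  have hab : a ≤ bb := min_le_max
  have main : ∀ n : ℕ, ∀ x y : ℝ, x ∈ Set.Icc a bb → y ∈ Set.Icc a bb →
      |y - x| ≤ 2 ^ n * δ → f ((x + y) / 2) ≤ (f x + f y) / 2 := by
    intro n
    induction n with
    | zero =>
      intro x y hx hy hd
      obtain ⟨hxa, hxb⟩ := hx
      obtain ⟨hya, hyb⟩ := hy
      rw [pow_zero, one_mul] at hd
      apply key x y
      intro α hα
      apply hsub
      have h1 : |x + α * (y - x) - (x + y) / 2| ≤ R * |y - x| := by
        rw [show x + α * (y - x) - (x + y) / 2 = (α - 1/2) * (y - x) by ring, abs_mul]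
        exact mul_le_mul_of_nonneg_right hα (abs_nonneg _)
      have h2 : R * |y - x| ≤ ε := by
        have := mul_le_mul_of_nonneg_left hd (le_of_lt hRpos)
        rw [hδdef, mul_div_cancel₀ ε (ne_of_gt hRpos)] at this
        exact this
      obtain ⟨hl, hr⟩ := abs_le.mp h1
      constructor <;> linarith
    | succ n ih =>
      intro x y hx hy hd
      obtain ⟨hxa, hxb⟩ := hx
      obtain ⟨hya, hyb⟩ := hy
      have hm : (x + y) / 2 ∈ Set.Icc a bb := by
        constructor <;> linarith
      have hd' : |y - x| ≤ 2 ^ n * 2 * δ := by rwa [← pow_succ]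
      have habs2 : |y - x| / 2 ≤ 2 ^ n * δ := by linarith
      have A := ih x ((x + y) / 2) ⟨hxa, hxb⟩ hm
        (by rw [show (x + y) / 2 - x = (y - x) / 2 by ring, abs_div, abs_two]; exact habs2)
      have B := ih ((x + y) / 2) y hm ⟨hya, hyb⟩
        (by rw [show y - (x + y) / 2 = (y - x) / 2 by ring, abs_div, abs_two]; exact habs2)
      have hm1 : (x + (x + y) / 2) / 2 ∈ Set.Icc a bb := by
        obtain ⟨p1, p2⟩ := hm
        constructor <;> linarith
      have hm2 : ((x + y) / 2 + y) / 2 ∈ Set.Icc a bb := by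
        obtain ⟨p1, p2⟩ := hm
        constructor <;> linarith
      have C := ih ((x + (x + y) / 2) / 2) (((x + y) / 2 + y) / 2) hm1 hm2
        (by rw [show ((x + y) / 2 + y) / 2 - (x + (x + y) / 2) / 2 = (y - x) / 2 by ring,
              abs_div, abs_two]; exact habs2)
      have Ceq : f (((x + (x + y) / 2) / 2 + ((x + y) / 2 + y) / 2) / 2) = f ((x + y) / 2) :=
        congrArg f (by ring)
      rw [Ceq] at C
      linarith
  obtain ⟨n, hn⟩ := pow_unbounded_of_one_lt (|v - u| / δ) (by norm_num : (1:ℝ) < 2)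
  have hd : |v - u| ≤ 2 ^ n * δ := by
    rw [div_lt_iff₀ hδ] at hn
    linarith
  have hu' : u ∈ Set.Icc a bb := ⟨min_le_left u v, le_max_left u v⟩
  have hv' : v ∈ Set.Icc a bb := ⟨min_le_right u v, le_max_right u v⟩
  exact main n u v hu' hv' hd
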